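/- Let p be a real number of the form p = 2i/(2j+1) with i, j positive integers and p > 2, and define F_p(t) = p·sgn(t)·|t|^{p-1} + |1-t|^p - |t|^p for all t ∈ ℝ. Then F_p(t) ≥ m_p for every t ∈ ℝ, where m_p is the minimum value of F_p on [0, 1/2]. -/

import Mathlib

open Real Set

/-- Tangent-line inequality above: `s^q + q s^(q-1) ≤ (1+s)^q` for `q > 1`, `s ≥ 0`. -/
private lemma bern_upper {q s : ℝ} (hq : 1 < q) (hs : 0 ≤ s) :
    s ^ q + q * s ^ (q - 1) ≤ (1 + s) ^ q := by
  rcases eq_or_lt_of_le hs with rfl | hs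
  · rw [Real.zero_rpow (show (0:ℝ) < q by linarith).ne',
      Real.zero_rpow (show (0:ℝ) < q - 1 by linarith).ne']
    norm_num
  · have h1 : (0:ℝ) ≤ 1 + 1/s := by positivity
    have hber : 1 + q * (1/s) ≤ (1 + 1/s) ^ q :=
      one_add_mul_self_le_rpow_one_add
        (le_trans (by norm_num) (by positivity : (0:ℝ) ≤ 1/s)) hq.le
    have hrw : 1 + s = s * (1 + 1/s) := by field_simp; ring
    have hsq : (0:ℝ) < s ^ q := Real.rpow_pos_of_pos hs q
    have hkey : s ^ q * (1 + q * (1/s)) ≤ s ^ q * (1 + 1/s) ^ q :=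
      mul_le_mul_of_nonneg_left hber hsq.le
    have hleft : s ^ q * (1 + q * (1/s)) = s ^ q + q * s ^ (q - 1) := by
      rw [Real.rpow_sub hs, Real.rpow_one]
      field_simp
    have hright : s ^ q * (1 + 1/s) ^ q = (1 + s) ^ q := by
      rw [hrw, Real.mul_rpow hs.le h1]
    rw [← hleft, ← hright]
    exact hkey

/-- Tangent-line inequality below: `t^q - q t^(q-1) ≤ (t-1)^q` for `q > 1`, `t ≥ 1`. -/
private lemma bern_lower {q t : ℝ} (hq : 1 < q) (ht : 1 ≤ t) :
    t ^ q - q * t ^ (q - 1) ≤ (t - 1) ^ q := by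
  have ht0 : (0:ℝ) < t := lt_of_lt_of_le one_pos ht
  have h1t : 1/t ≤ 1 := by rw [div_le_one ht0]; exact ht
  have hne : (-1:ℝ)/t = -(1/t) := by ring
  have h1 : (0:ℝ) ≤ 1 + (-1/t) := by rw [hne]; linarith
  have hber : 1 + q * (-1/t) ≤ (1 + (-1/t)) ^ q :=
    one_add_mul_self_le_rpow_one_add (by rw [hne]; linarith) hq.le
  have hrw : t - 1 = t * (1 + (-1/t)) := by field_simp; ring
  have htq : (0:ℝ) < t ^ q := Real.rpow_pos_of_pos ht0 q
  have hkey : t ^ q * (1 + q * (-1/t)) ≤ t ^ q * (1 + (-1/t)) ^ q :=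
    mul_le_mul_of_nonneg_left hber htq.le
  have hleft : t ^ q * (1 + q * (-1/t)) = t ^ q - q * t ^ (q - 1) := by
    rw [Real.rpow_sub ht0, Real.rpow_one]
    field_simp
    ring
  have hright : t ^ q * (1 + (-1/t)) ^ q = (t - 1) ^ q := by
    rw [hrw, Real.mul_rpow ht0.le h1]
  rw [← hleft, ← hright]
  exact hkey

/-- `g` is monotone on `[1/2, 1]`. -/
private lemma mono_mid {p : ℝ} (hp2 : 2 < p) :
    MonotoneOn (fun t : ℝ => p * t ^ (p-1) + (1-t) ^ p - t ^ p) (Icc (1/2 : ℝ) 1) := by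
  have hcont : Continuous (fun t : ℝ => p * t ^ (p-1) + (1-t) ^ p - t ^ p) := by
    have c1 : Continuous fun t : ℝ => t ^ (p-1) := Real.continuous_rpow_const (by linarith)
    have c2 : Continuous fun t : ℝ => (1-t) ^ p :=
      (Real.continuous_rpow_const (by linarith)).comp (continuous_const.sub continuous_id)
    have c3 : Continuous fun t : ℝ => t ^ p := Real.continuous_rpow_const (by linarith)
    exact ((continuous_const.mul c1).add c2).sub c3
  have hderiv : ∀ x ∈ interior (Icc (1/2 : ℝ) 1),
      HasDerivAt (fun t : ℝ => p * t ^ (p-1) + (1-t) ^ p - t ^ p)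
        (p * ((p-1) * x ^ (p-1-1)) + p * (1-x) ^ (p-1) * (-1) - p * x ^ (p-1)) x := by
    intro x hx
    rw [interior_Icc] at hx
    have hx0 : x ≠ 0 := (show (0:ℝ) < x by linarith [hx.1]).ne'
    have hx1 : (1:ℝ) - x ≠ 0 := (show (0:ℝ) < 1 - x by linarith [hx.2]).ne'
    have h1 : HasDerivAt (fun t : ℝ => t ^ (p-1)) ((p-1) * x ^ (p-1-1)) x :=
      Real.hasDerivAt_rpow_const (Or.inl hx0)
    have hin : HasDerivAt (fun t : ℝ => 1 - t) (-1) x := (hasDerivAt_id x).const_sub 1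
    have h2 : HasDerivAt (fun t : ℝ => (1-t) ^ p) (p * (1-x) ^ (p-1) * (-1)) x :=
      (Real.hasDerivAt_rpow_const (Or.inl hx1)).comp x hin
    have h3 : HasDerivAt (fun t : ℝ => t ^ p) (p * x ^ (p-1)) x :=
      Real.hasDerivAt_rpow_const (Or.inl hx0)
    exact ((h1.const_mul p).add h2).sub h3
  apply monotoneOn_of_deriv_nonneg (convex_Icc _ _) hcont.continuousOn
  · intro x hx
    exact ((hderiv x hx).differentiableAt).differentiableWithinAt
  · intro x hx
    rw [(hderiv x hx).deriv]
    rw [interior_Icc] at hx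
    have hxpos : (0:ℝ) < x := by linarith [hx.1]
    have hx1 : (0:ℝ) < 1 - x := by linarith [hx.2]
    have hhalf : 1 - x ≤ x := by linarith [hx.1]
    have e1 : x ^ (p-1) = x ^ (p-2) * x := by
      rw [show p - 1 = (p-2) + 1 by ring, Real.rpow_add hxpos, Real.rpow_one]
    have e2 : (1-x) ^ (p-1) = (1-x) ^ (p-2) * (1-x) := by
      rw [show p - 1 = (p-2) + 1 by ring, Real.rpow_add hx1, Real.rpow_one]
    have e3 : (1-x) ^ (p-2) ≤ x ^ (p-2) :=
      Real.rpow_le_rpow hx1.le hhalf (by linarith)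
    have e4 : (0:ℝ) < x ^ (p-2) := Real.rpow_pos_of_pos hxpos _
    have key : x ^ (p-1) + (1-x) ^ (p-1) ≤ (p-1) * x ^ (p-2) := by
      rw [e1, e2]
      nlinarith [e3, e4, hx1.le]
    rw [show p - 1 - 1 = p - 2 by ring]
    nlinarith [key, hp2]

/-- `g₄` is monotone on `[1, ∞)`. -/
private lemma mono_right {p : ℝ} (hp2 : 2 < p) :
    MonotoneOn (fun t : ℝ => p * t ^ (p-1) + (t-1) ^ p - t ^ p) (Ici (1:ℝ)) := by
  have hcont : Continuous (fun t : ℝ => p * t ^ (p-1) + (t-1) ^ p - t ^ p) := by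
    have c1 : Continuous fun t : ℝ => t ^ (p-1) := Real.continuous_rpow_const (by linarith)
    have c2 : Continuous fun t : ℝ => (t-1) ^ p :=
      (Real.continuous_rpow_const (by linarith)).comp (continuous_id.sub continuous_const)
    have c3 : Continuous fun t : ℝ => t ^ p := Real.continuous_rpow_const (by linarith)
    exact ((continuous_const.mul c1).add c2).sub c3
  have hderiv : ∀ x ∈ interior (Ici (1:ℝ)),
      HasDerivAt (fun t : ℝ => p * t ^ (p-1) + (t-1) ^ p - t ^ p)
        (p * ((p-1) * x ^ (p-1-1)) + p * (x-1) ^ (p-1) * 1 - p * x ^ (p-1)) x := by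
    intro x hx
    rw [interior_Ici, Set.mem_Ioi] at hx
    have hx0 : x ≠ 0 := (show (0:ℝ) < x by linarith).ne'
    have hx1 : x - 1 ≠ 0 := (show (0:ℝ) < x - 1 by linarith).ne'
    have h1 : HasDerivAt (fun t : ℝ => t ^ (p-1)) ((p-1) * x ^ (p-1-1)) x :=
      Real.hasDerivAt_rpow_const (Or.inl hx0)
    have hin : HasDerivAt (fun t : ℝ => t - 1) 1 x := (hasDerivAt_id x).sub_const 1
    have h2 : HasDerivAt (fun t : ℝ => (t-1) ^ p) (p * (x-1) ^ (p-1) * 1) x :=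
      have hout : HasDerivAt (fun y : ℝ => y ^ p) (p * (x-1) ^ (p-1)) (x - 1) :=
        Real.hasDerivAt_rpow_const (Or.inl hx1)
      by have hc := hout.comp x hin; simpa [Function.comp_def] using hc
    have h3 : HasDerivAt (fun t : ℝ => t ^ p) (p * x ^ (p-1)) x :=
      Real.hasDerivAt_rpow_const (Or.inl hx0)
    exact ((h1.const_mul p).add h2).sub h3
  apply monotoneOn_of_deriv_nonneg (convex_Ici _) hcont.continuousOn
  · intro x hx
    exact ((hderiv x hx).differentiableAt).differentiableWithinAt
  · intro x hx
    rw [(hderiv x hx).deriv]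
    rw [interior_Ici, Set.mem_Ioi] at hx
    have hb : x ^ (p-1) - (p-1) * x ^ ((p-1)-1) ≤ (x-1) ^ (p-1) :=
      bern_lower (by linarith) hx.le
    rw [show p - 1 - 1 = p - 2 by ring] at hb ⊢
    nlinarith [hb, hp2]

/-- `g₁` is antitone on `(-∞, 0]`. -/
private lemma anti_left {p : ℝ} (hp2 : 2 < p) :
    AntitoneOn (fun t : ℝ => -(p * (-t) ^ (p-1)) + (1-t) ^ p - (-t) ^ p) (Iic (0:ℝ)) := by
  have hcont : Continuous (fun t : ℝ => -(p * (-t) ^ (p-1)) + (1-t) ^ p - (-t) ^ p) := by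
    have c1 : Continuous fun t : ℝ => (-t) ^ (p-1) :=
      (Real.continuous_rpow_const (by linarith)).comp continuous_neg
    have c2 : Continuous fun t : ℝ => (1-t) ^ p :=
      (Real.continuous_rpow_const (by linarith)).comp (continuous_const.sub continuous_id)
    have c3 : Continuous fun t : ℝ => (-t) ^ p :=
      (Real.continuous_rpow_const (by linarith)).comp continuous_neg
    exact ((continuous_const.mul c1).neg.add c2).sub c3
  have hderiv : ∀ x ∈ interior (Iic (0:ℝ)),
      HasDerivAt (fun t : ℝ => -(p * (-t) ^ (p-1)) + (1-t) ^ p - (-t) ^ p)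
        (-(p * ((p-1) * (-x) ^ (p-1-1) * (-1))) + p * (1-x) ^ (p-1) * (-1)
          - p * (-x) ^ (p-1) * (-1)) x := by
    intro x hx
    rw [interior_Iic, Set.mem_Iio] at hx
    have hx0 : -x ≠ 0 := (show (0:ℝ) < -x by linarith).ne'
    have hx1 : (1:ℝ) - x ≠ 0 := (show (0:ℝ) < 1 - x by linarith).ne'
    have hneg : HasDerivAt (fun t : ℝ => -t) (-1) x := hasDerivAt_neg x
    have h1 : HasDerivAt (fun t : ℝ => (-t) ^ (p-1)) ((p-1) * (-x) ^ (p-1-1) * (-1)) x :=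
      (Real.hasDerivAt_rpow_const (Or.inl hx0)).comp x hneg
    have hin : HasDerivAt (fun t : ℝ => 1 - t) (-1) x := (hasDerivAt_id x).const_sub 1
    have h2 : HasDerivAt (fun t : ℝ => (1-t) ^ p) (p * (1-x) ^ (p-1) * (-1)) x :=
      (Real.hasDerivAt_rpow_const (Or.inl hx1)).comp x hin
    have h3 : HasDerivAt (fun t : ℝ => (-t) ^ p) (p * (-x) ^ (p-1) * (-1)) x :=
      (Real.hasDerivAt_rpow_const (Or.inl hx0)).comp x hneg
    exact (((h1.const_mul p).neg).add h2).sub h3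
  apply antitoneOn_of_deriv_nonpos (convex_Iic _) hcont.continuousOn
  · intro x hx
    exact ((hderiv x hx).differentiableAt).differentiableWithinAt
  · intro x hx
    rw [(hderiv x hx).deriv]
    rw [interior_Iic, Set.mem_Iio] at hx
    have hs : (0:ℝ) ≤ -x := by linarith
    have hb : (-x) ^ (p-1) + (p-1) * (-x) ^ ((p-1)-1) ≤ (1 + (-x)) ^ (p-1) :=
      bern_upper (by linarith) hs
    rw [show (1:ℝ) + (-x) = 1 - x by ring] at hb
    rw [show p - 1 - 1 = p - 2 by ring] at hb ⊢
    nlinarith [hb, hp2]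

/-- Lemma 2, last part: for `p = 2i/(2j+1) > 2`, the extension
`F_p(t) = p sgn(t) |t|^(p-1) + |1-t|^p - |t|^p` of `f_p` to all of `ℝ` satisfies
`F_p(t) ≥ m_p` for every real `t`, where `m_p` is the minimum value of `F_p` (equivalently,
of `f_p`) on `[0, 1/2]`. -/
theorem stmt11 (p : ℝ) (i j : ℕ) (hi : 0 < i) (hj : 0 < j)
    (hp : p = 2 * (i : ℝ) / (2 * (j : ℝ) + 1)) (hp2 : 2 < p) (t : ℝ) :
    sInf ((fun t : ℝ => p * Real.sign t * |t| ^ (p - 1) + |1 - t| ^ p - |t| ^ p) ''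
        Set.Icc 0 (1 / 2))
      ≤ p * Real.sign t * |t| ^ (p - 1) + |1 - t| ^ p - |t| ^ p := by
  clear hp hi hj
  set F : ℝ → ℝ := fun t : ℝ => p * Real.sign t * |t| ^ (p - 1) + |1 - t| ^ p - |t| ^ p with hF
  set g : ℝ → ℝ := fun t : ℝ => p * t ^ (p-1) + (1-t) ^ p - t ^ p with hg
  -- F = g on [0, 1]
  have hFg : ∀ s : ℝ, 0 ≤ s → s ≤ 1 → F s = g s := by
    intro s hs0 hs1
    rcases eq_or_lt_of_le hs0 with rfl | hpos
    · rw [hF, hg]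
      norm_num [Real.sign_zero, Real.zero_rpow (show p - 1 ≠ 0 by linarith),
        Real.zero_rpow (show p ≠ 0 by linarith)]
    · have habs : |s| = s := abs_of_pos hpos
      have habs1 : |1 - s| = 1 - s := abs_of_nonneg (by linarith)
      rw [hF, hg]
      simp only [habs, habs1, Real.sign_of_pos hpos, mul_one]
  -- F = g₁ on (-∞, 0]
  have hFg1 : ∀ s : ℝ, s ≤ 0 → F s = -(p * (-s) ^ (p-1)) + (1-s) ^ p - (-s) ^ p := by
    intro s hs
    rcases eq_or_lt_of_le hs with heq | hneg
    · subst heq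
      rw [hF]
      norm_num [Real.sign_zero, Real.zero_rpow (show p - 1 ≠ 0 by linarith),
        Real.zero_rpow (show p ≠ 0 by linarith)]
    · have habs : |s| = -s := abs_of_neg hneg
      have habs1 : |1 - s| = 1 - s := abs_of_nonneg (by linarith)
      rw [hF]
      simp only [habs, habs1, Real.sign_of_neg hneg]
      ring
  -- F = g₄ on [1, ∞)
  have hFg4 : ∀ s : ℝ, 1 ≤ s → F s = p * s ^ (p-1) + (s-1) ^ p - s ^ p := by
    intro s hs
    have hspos : (0:ℝ) < s := by linarith
    have habs : |s| = s := abs_of_pos hspos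
    have habs1 : |1 - s| = s - 1 := by rw [abs_sub_comm]; exact abs_of_nonneg (by linarith)
    rw [hF]
    simp only [habs, habs1, Real.sign_of_pos hspos, mul_one]
  -- continuity and boundedness
  have hgcont : Continuous g := by
    rw [hg]
    have c1 : Continuous fun t : ℝ => t ^ (p-1) := Real.continuous_rpow_const (by linarith)
    have c2 : Continuous fun t : ℝ => (1-t) ^ p :=
      (Real.continuous_rpow_const (by linarith)).comp (continuous_const.sub continuous_id)
    have c3 : Continuous fun t : ℝ => t ^ p := Real.continuous_rpow_const (by linarith)
    exact ((continuous_const.mul c1).add c2).sub c3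
  have hFcont : ContinuousOn F (Icc (0:ℝ) (1/2)) := by
    apply hgcont.continuousOn.congr
    intro s hs
    exact hFg s hs.1 (by linarith [hs.2])
  have hbdd : BddBelow (F '' Icc (0:ℝ) (1/2)) :=
    (isCompact_Icc.image_of_continuousOn hFcont).bddBelow
  have key : ∀ s ∈ Icc (0:ℝ) (1/2), sInf (F '' Icc (0:ℝ) (1/2)) ≤ F s := by
    intro s hs
    exact csInf_le hbdd (Set.mem_image_of_mem F hs)
  have hhalfmem : (1/2 : ℝ) ∈ Icc (0:ℝ) (1/2) := by norm_num
  have h0mem : (0 : ℝ) ∈ Icc (0:ℝ) (1/2) := by norm_num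
  show sInf (F '' Icc (0:ℝ) (1/2)) ≤ F t
  rcases le_or_gt t 0 with ht | ht
  · -- t ≤ 0
    have h1 : F 0 ≤ F t := by
      rw [hFg1 t ht, hFg1 0 le_rfl]
      exact anti_left hp2 (Set.mem_Iic.mpr ht) (Set.mem_Iic.mpr le_rfl) ht
    exact le_trans (key 0 h0mem) h1
  · rcases le_or_gt t (1/2) with ht2 | ht2
    · exact key t ⟨ht.le, ht2⟩
    · rcases le_or_gt t 1 with ht3 | ht3
      · -- 1/2 < t ≤ 1
        have h1 : g (1/2) ≤ g t := by
          rw [hg]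
          exact mono_mid hp2 ⟨le_refl _, by norm_num⟩ ⟨ht2.le, ht3⟩ ht2.le
        calc sInf (F '' Icc (0:ℝ) (1/2)) ≤ F (1/2) := key _ hhalfmem
          _ = g (1/2) := hFg _ (by norm_num) (by norm_num)
          _ ≤ g t := h1
          _ = F t := (hFg t (by linarith) ht3).symm
      · -- 1 < t
        have h1 : g (1/2) ≤ g 1 := by
          rw [hg]
          exact mono_mid hp2 ⟨le_refl _, by norm_num⟩ ⟨by norm_num, le_refl _⟩ (by norm_num)
        have h2 : g 1 ≤ F t := by
          rw [hFg4 t ht3.le, hg]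
          have := mono_right hp2 (Set.mem_Ici.mpr (le_refl (1:ℝ)))
            (Set.mem_Ici.mpr ht3.le) ht3.le
          convert this using 2 <;> norm_num
        calc sInf (F '' Icc (0:ℝ) (1/2)) ≤ F (1/2) := key _ hhalfmem
          _ = g (1/2) := hFg _ (by norm_num) (by norm_num)
          _ ≤ g 1 := h1
          _ ≤ F t := h2
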